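/- arXiv:1603.00401 — 5 statements merged into one kernel-verified Lean document; each statement's English description precedes it below -/
import Mathlib

section
/- If p and q are primes, s and t are positive integers, and J₂(p^s) = J₂(q^t), then p^s = q^t or {p^s, q^t} = {7, 8}. -/
noncomputable def J (k n : ℕ) : ℚ :=
  (n : ℚ) ^ k * ∏ p ∈ n.primeFactors, (1 - 1 / (p : ℚ) ^ k)

noncomputable def I (n : ℕ) : ℚ := if n = 2 then 2 else 1

noncomputable def D (n : ℕ) : ℚ := J 2 n * I n / 2

lemma Jval (p s : ℕ) (hp : p.Prime) (hs : 1 ≤ s) :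
    J 2 (p ^ s) = ((p ^ (2 * s - 2) * (p ^ 2 - 1) : ℕ) : ℚ) := by
  obtain ⟨s', rfl⟩ := Nat.exists_eq_add_of_le hs
  have hp2 : (1 : ℕ) ≤ p ^ 2 := Nat.one_le_pow _ _ hp.pos
  have hpf : (p ^ (1 + s')).primeFactors = {p} :=
    Nat.primeFactors_prime_pow (by omega) hp
  have hp0 : (p : ℚ) ≠ 0 := Nat.cast_ne_zero.mpr hp.pos.ne'
  rw [J, hpf, Finset.prod_singleton]
  rw [show 2 * (1 + s') - 2 = 2 * s' by omega]
  push_cast [Nat.cast_sub hp2]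
  field_simp
  ring


lemma keylt (p q s t : ℕ) (hp : p.Prime) (hq : q.Prime)
    (hs : 1 ≤ s) (ht : 1 ≤ t) (hlt : p < q)
    (h : p ^ (2 * s - 2) * (p ^ 2 - 1) = q ^ (2 * t - 2) * (q ^ 2 - 1)) :
    p = 2 ∧ s = 3 ∧ q = 7 ∧ t = 1 := by
  have hp2 := hp.two_le
  have hq2 := hq.two_le
  have hpq2 : p ^ 2 < q ^ 2 := Nat.pow_lt_pow_left hlt two_ne_zero
  obtain ⟨P, hP⟩ : ∃ P, p ^ 2 = P + 1 :=
    ⟨p ^ 2 - 1, (Nat.succ_pred_eq_of_pos (by positivity)).symm⟩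
  obtain ⟨Q, hQ⟩ : ∃ Q, q ^ 2 = Q + 1 :=
    ⟨q ^ 2 - 1, (Nat.succ_pred_eq_of_pos (by positivity)).symm⟩
  rw [show p ^ 2 - 1 = P by omega, show q ^ 2 - 1 = Q by omega] at h
  have hp4 : 4 ≤ p ^ 2 := by nlinarith
  have hP3 : 3 ≤ P := by linarith
  have hQ3 : P < Q := by linarith
  have hco : Nat.Coprime q p := (Nat.coprime_primes hq hp).mpr (by omega)
  -- t = 1
  have ht1 : t = 1 := by
    by_contra hne
    have hdvd : q ^ (2 * t - 2) ∣ p ^ (2 * s - 2) * P := ⟨Q, h⟩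
    have hcop : Nat.Coprime (q ^ (2 * t - 2)) (p ^ (2 * s - 2)) :=
      Nat.Coprime.pow _ _ hco
    have hd2 : q ^ (2 * t - 2) ∣ P := hcop.dvd_of_dvd_mul_left hdvd
    have hle : q ^ (2 * t - 2) ≤ P := Nat.le_of_dvd (by omega) hd2
    have hle2 : q ^ 2 ≤ q ^ (2 * t - 2) := Nat.pow_le_pow_right (by omega) (by omega)
    linarith
  subst ht1
  rw [show 2 * 1 - 2 = 0 by omega, pow_zero, one_mul] at h
  -- s ≥ 2
  have hs2 : 2 ≤ s := by
    by_contra h1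
    have : s = 1 := by omega
    subst this
    rw [show 2 * 1 - 2 = 0 by omega, pow_zero, one_mul] at h
    omega
  -- u := p^(s-1)
  obtain ⟨u, hu2, hudef⟩ : ∃ u, p ^ (2 * s - 2) = u ^ 2 ∧ u = p ^ (s - 1) :=
    ⟨p ^ (s - 1), by rw [← pow_mul, show (s-1)*2 = 2*s-2 by omega], rfl⟩
  rw [hu2] at h
  have hup : p ≤ u := by
    rw [hudef]
    calc p = p ^ 1 := (pow_one p).symm
    _ ≤ p ^ (s - 1) := Nat.pow_le_pow_right (by omega) (by omega)
  rcases hp.eq_two_or_odd' with rfl | hodd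
  · -- p = 2 : P = 3
    have hP3' : P = 3 := by omega
    subst hP3'
    obtain ⟨a, ha⟩ : ∃ a, q = 2 * a + 1 := by
      obtain ⟨a, ha⟩ := hq.odd_of_ne_two (by omega)
      exact ⟨a, by omega⟩
    have ha1 : 1 ≤ a := by omega
    have hQa : Q = 4 * (a * (a + 1)) := by
      have h1 : (2 * a + 1) ^ 2 = 4 * (a * (a + 1)) + 1 := by ring
      rw [ha] at hQ
      omega
    have hu4 : u ^ 2 = 4 * 2 ^ (2 * (s - 2)) := by
      rw [← hu2, show 2 * s - 2 = 2 + 2 * (s - 2) by omega, pow_add]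
      norm_num
    have heq : a * (a + 1) = 3 * 2 ^ (2 * (s - 2)) := by
      rw [hu4, hQa] at h
      have h4 : (0:ℕ) < 4 := by norm_num
      have := Nat.eq_of_mul_eq_mul_left h4
        (show 4 * (2 ^ (2 * (s - 2)) * 3) = 4 * (a * (a + 1)) by linarith)
      linarith
    have hdv : 2 ^ (2 * (s - 2)) ∣ a * (a + 1) := ⟨3, by linarith⟩
    have hEle : 2 ^ (2 * (s - 2)) ≤ a + 1 := by
      rcases Nat.even_or_odd a with he | ho
      · have hndvd : ¬ (2 ∣ a + 1) := by
          rcases he with ⟨k, hk⟩; omega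
        have hcop2 : Nat.Coprime (2 ^ (2 * (s - 2))) (a + 1) :=
          Nat.Coprime.pow_left _ ((Nat.Prime.coprime_iff_not_dvd Nat.prime_two).mpr hndvd)
        have hda : 2 ^ (2 * (s - 2)) ∣ a := hcop2.dvd_of_dvd_mul_right hdv
        have := Nat.le_of_dvd (by omega) hda
        omega
      · have hndvd : ¬ (2 ∣ a) := by
          rcases ho with ⟨k, hk⟩; omega
        have hcop2 : Nat.Coprime (2 ^ (2 * (s - 2))) a :=
          Nat.Coprime.pow_left _ ((Nat.Prime.coprime_iff_not_dvd Nat.prime_two).mpr hndvd)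
        have hda : 2 ^ (2 * (s - 2)) ∣ a + 1 := hcop2.dvd_of_dvd_mul_left hdv
        exact Nat.le_of_dvd (by omega) hda
    have ha3 : a ≤ 3 := by
      have h5 : a * (a + 1) ≤ 3 * (a + 1) := by
        calc a * (a + 1) = 3 * 2 ^ (2 * (s - 2)) := heq
        _ ≤ 3 * (a + 1) := Nat.mul_le_mul_left 3 hEle
      exact Nat.le_of_mul_le_mul_right h5 (by omega)
    have hs3 : s ≤ 3 := by
      by_contra hc
      have h16 : 2 ^ 4 ≤ 2 ^ (2 * (s - 2)) := Nat.pow_le_pow_right (by norm_num) (by omega)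
      norm_num at h16
      omega
    interval_cases s
    · exfalso
      norm_num at heq
      interval_cases a <;> omega
    · norm_num at heq
      have : a = 3 := by interval_cases a <;> omega
      exact ⟨rfl, rfl, by omega, rfl⟩
  · -- p odd : contradiction
    exfalso
    have hp3 : 3 ≤ p := by
      rcases hodd with ⟨k, hk⟩; omega
    obtain ⟨r, rfl⟩ : ∃ r, q = r + 2 := ⟨q - 2, by omega⟩
    have hQfac : Q = (r + 1) * (r + 3) := by
      have h1 : (r + 2) ^ 2 = r * r + 4 * r + 4 := by ring
      have h2 : (r + 1) * (r + 3) = r * r + 4 * r + 3 := by ring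
      omega
    have hdvQ : u ^ 2 ∣ (r + 1) * (r + 3) := ⟨P, by rw [← hQfac]; linarith⟩
    have hle : u ^ 2 ≤ r + 3 := by
      by_cases hd : p ∣ (r + 1)
      · have hnd : ¬ p ∣ (r + 3) := by
          intro hd2
          have := Nat.dvd_sub hd2 hd
          rw [show r + 3 - (r + 1) = 2 by omega] at this
          have := Nat.le_of_dvd (by norm_num) this
          omega
        have hcp : Nat.Coprime (u ^ 2) (r + 3) := by
          rw [hudef, ← pow_mul]
          exact Nat.Coprime.pow_left _ ((hp.coprime_iff_not_dvd).mpr hnd)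
        have := Nat.le_of_dvd (by omega) (hcp.dvd_of_dvd_mul_right hdvQ)
        omega
      · have hcp : Nat.Coprime (u ^ 2) (r + 1) := by
          rw [hudef, ← pow_mul]
          exact Nat.Coprime.pow_left _ ((hp.coprime_iff_not_dvd).mpr hd)
        exact Nat.le_of_dvd (by omega) (hcp.dvd_of_dvd_mul_left hdvQ)
    have hu3 : 3 ≤ u := le_trans hp3 hup
    have hPge : r + 1 ≤ P := by
      by_contra hc
      push_neg at hc
      have h5 : u ^ 2 * P ≤ (r + 3) * P := Nat.mul_le_mul hle (le_refl P)
      have h6 : (r + 3) * P ≤ (r + 3) * r := Nat.mul_le_mul (le_refl (r + 3)) (by omega)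
      have e1 : (r + 1) * (r + 3) = r * r + 4 * r + 3 := by ring
      have e2 : (r + 3) * r = r * r + 3 * r := by ring
      linarith
    rcases Nat.lt_or_ge s 3 with hc | hc
    · -- s = 2, u = p
      have hup2 : u = p := by rw [hudef, show s - 1 = 1 by omega, pow_one]
      subst hup2
      rw [hP] at h
      have e1 : (r + 2) * (r + 2) = Q + 1 := by rw [← hQ]; ring
      have e2 : P * P + P = Q := by rw [← h]; ring
      rcases le_or_gt (r + 3) (P + 1) with hcase | hcase
      · have hrP : r + 2 ≤ P := by omega
        have h5 : (r + 2) * (r + 2) ≤ P * P := Nat.mul_le_mul hrP hrP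
        linarith
      · have h5 : (P + 1) * (P + 1) ≤ (r + 2) * (r + 2) :=
          Nat.mul_le_mul (by omega) (by omega)
        have e3 : (P + 1) * (P + 1) = P * P + 2 * P + 1 := by ring
        linarith
    · -- s ≥ 3
      have hpu : p ^ 2 ≤ u := by
        rw [hudef]
        exact Nat.pow_le_pow_right (by omega) (by omega)
      have hp9 : 9 ≤ p ^ 2 := by
        have := Nat.mul_le_mul hp3 hp3
        rw [pow_two]; linarith
      have h9 : 9 ≤ u := le_trans hp9 hpu
      have hub : u ^ 2 ≤ P + 2 := by linarith
      have h10 : 9 * u ≤ u * u := Nat.mul_le_mul h9 (le_refl u)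
      have e4 : u * u = u ^ 2 := (pow_two u).symm
      linarith

theorem stmt6 (p q s t : ℕ) (hp : p.Prime) (hq : q.Prime)
    (hs : 1 ≤ s) (ht : 1 ≤ t) (h : J 2 (p ^ s) = J 2 (q ^ t)) :
    p ^ s = q ^ t ∨ (p ^ s = 7 ∧ q ^ t = 8) ∨ (p ^ s = 8 ∧ q ^ t = 7) := by
  rw [Jval p s hp hs, Jval q t hq ht] at h
  have hnat : p ^ (2 * s - 2) * (p ^ 2 - 1) = q ^ (2 * t - 2) * (q ^ 2 - 1) :=
    Nat.cast_injective h
  rcases lt_trichotomy p q with hlt | heq | hgt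
  · obtain ⟨rfl, rfl, rfl, rfl⟩ := keylt p q s t hp hq hs ht hlt hnat
    right; right; exact ⟨by norm_num, by norm_num⟩
  · subst heq
    left
    have hpos : 0 < p ^ 2 - 1 := by
      have := hp.two_le
      have : 4 ≤ p ^ 2 := by nlinarith
      omega
    have h2 : p ^ (2 * s - 2) = p ^ (2 * t - 2) :=
      Nat.eq_of_mul_eq_mul_right hpos hnat
    have h3 : 2 * s - 2 = 2 * t - 2 :=
      Nat.pow_right_injective hp.two_le h2
    have : s = t := by omega
    rw [this]
  · obtain ⟨rfl, rfl, rfl, rfl⟩ := keylt q p t s hq hp ht hs hgt hnat.symm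
    right; left; exact ⟨by norm_num, by norm_num⟩
end

section
/- If p₁ ≠ p₂ and q₁ ≠ q₂ are primes with J₂(p₁p₂) = J₂(q₁q₂) and J₄(p₁p₂) = J₄(q₁q₂), then p₁p₂ = q₁q₂. -/
lemma Jpq (k p q : ℕ) (hp : p.Prime) (hq : q.Prime) (hpq : p ≠ q) :
    J k (p * q) = ((p : ℚ) ^ k - 1) * ((q : ℚ) ^ k - 1) := by
  have hpf : (p * q).primeFactors = {p, q} := by
    rw [Nat.primeFactors_mul hp.pos.ne' hq.pos.ne', hp.primeFactors, hq.primeFactors]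
    rfl
  have hp0 : ((p : ℚ) ^ k) ≠ 0 := pow_ne_zero k (by exact_mod_cast hp.pos.ne')
  have hq0 : ((q : ℚ) ^ k) ≠ 0 := pow_ne_zero k (by exact_mod_cast hq.pos.ne')
  rw [J, hpf, Finset.prod_pair hpq]
  push_cast
  field_simp
  ring

theorem stmt7 (p₁ p₂ q₁ q₂ : ℕ) (hp₁ : p₁.Prime) (hp₂ : p₂.Prime)
    (hq₁ : q₁.Prime) (hq₂ : q₂.Prime) (hp : p₁ ≠ p₂) (hq : q₁ ≠ q₂)
    (h2 : J 2 (p₁ * p₂) = J 2 (q₁ * q₂)) (h4 : J 4 (p₁ * p₂) = J 4 (q₁ * q₂)) :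
    p₁ * p₂ = q₁ * q₂ := by
  rw [Jpq 2 _ _ hp₁ hp₂ hp, Jpq 2 _ _ hq₁ hq₂ hq] at h2
  rw [Jpq 4 _ _ hp₁ hp₂ hp, Jpq 4 _ _ hq₁ hq₂ hq] at h4
  set a := (p₁ : ℚ) ^ 2 with ha
  set b := (p₂ : ℚ) ^ 2 with hb
  set c := (q₁ : ℚ) ^ 2 with hc
  set d := (q₂ : ℚ) ^ 2 with hd
  have h4' : (a ^ 2 - 1) * (b ^ 2 - 1) = (c ^ 2 - 1) * (d ^ 2 - 1) := by
    have : ∀ n : ℕ, (n : ℚ) ^ 4 = ((n : ℚ) ^ 2) ^ 2 := fun n => by ring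
    rw [this, this, this, this] at h4
    exact h4
  have ha4 : (4 : ℚ) ≤ a := by
    have := hp₁.two_le
    rw [ha]
    have : (2 : ℚ) ≤ (p₁ : ℚ) := by exact_mod_cast hp₁.two_le
    nlinarith
  have hb4 : (4 : ℚ) ≤ b := by
    have : (2 : ℚ) ≤ (p₂ : ℚ) := by exact_mod_cast hp₂.two_le
    rw [hb]; nlinarith
  have hpos : (a - 1) * (b - 1) ≠ 0 := by nlinarith
  have h3 : (a + 1) * (b + 1) = (c + 1) * (d + 1) := by
    have key : (a - 1) * (b - 1) * ((a + 1) * (b + 1))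
        = (a - 1) * (b - 1) * ((c + 1) * (d + 1)) := by
      calc (a - 1) * (b - 1) * ((a + 1) * (b + 1))
          = (a ^ 2 - 1) * (b ^ 2 - 1) := by ring
        _ = (c ^ 2 - 1) * (d ^ 2 - 1) := h4'
        _ = (c - 1) * (d - 1) * ((c + 1) * (d + 1)) := by ring
        _ = (a - 1) * (b - 1) * ((c + 1) * (d + 1)) := by rw [← h2]
    exact mul_left_cancel₀ hpos key
  have habcd : a * b = c * d := by linear_combination h2 / 2 + h3 / 2
  have hQ : ((p₁ * p₂ : ℕ) : ℚ) ^ 2 = ((q₁ * q₂ : ℕ) : ℚ) ^ 2 := by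
    push_cast
    rw [ha, hb, hc, hd] at habcd
    nlinarith [habcd]
  have hN : (p₁ * p₂) ^ 2 = (q₁ * q₂) ^ 2 := by exact_mod_cast hQ
  exact Nat.pow_left_injective (by norm_num) hN
end

section
/- If m and n are positive integers with J_k(m) = J_k(n) for infinitely many positive integers k, then m = n. -/
lemma J_le_pow (k n : ℕ) : J k n ≤ (n : ℚ) ^ k := by
  have h1 : ∏ p ∈ n.primeFactors, (1 - 1 / (p : ℚ) ^ k) ≤ 1 := by
    apply Finset.prod_le_one
    · intro p hp
      have hp2 : 2 ≤ p := (Nat.prime_of_mem_primeFactors hp).two_le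
      have hp1 : (1 : ℚ) ≤ (p : ℚ) := by exact_mod_cast Nat.one_le_of_lt hp2
      have : (1 : ℚ) ≤ (p : ℚ) ^ k := one_le_pow₀ hp1
      have : 1 / (p : ℚ) ^ k ≤ 1 := by
        rw [div_le_one (by linarith)]; linarith
      linarith
    · intro p hp
      have : (0 : ℚ) ≤ 1 / (p : ℚ) ^ k := by positivity
      linarith
  calc J k n ≤ (n : ℚ) ^ k * 1 := by
        apply mul_le_mul_of_nonneg_left h1 (by positivity)
    _ = (n : ℚ) ^ k := by ring

lemma J_ge (k n : ℕ) :
    (n : ℚ) ^ k * (1 - (n.primeFactors.card : ℚ) * (1/2) ^ k) ≤ J k n := by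
  apply mul_le_mul_of_nonneg_left _ (by positivity)
  have h2 : ((1 : ℚ) - (1/2) ^ k) ^ n.primeFactors.card
      ≤ ∏ p ∈ n.primeFactors, (1 - 1 / (p : ℚ) ^ k) := by
    rw [← Finset.prod_const]
    apply Finset.prod_le_prod
    · intro p hp
      have : ((1:ℚ)/2) ^ k ≤ 1 := pow_le_one₀ (by norm_num) (by norm_num)
      linarith
    · intro p hp
      have hp2 : (2 : ℚ) ≤ (p : ℚ) := by
        exact_mod_cast (Nat.prime_of_mem_primeFactors hp).two_le
      have hpk : (2 : ℚ) ^ k ≤ (p : ℚ) ^ k := pow_le_pow_left₀ (by norm_num) hp2 k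
      have h2k : (0 : ℚ) < 2 ^ k := by positivity
      have : 1 / (p : ℚ) ^ k ≤ 1 / 2 ^ k := by
        apply one_div_le_one_div_of_le h2k hpk
      have he : ((1:ℚ)/2) ^ k = 1 / 2 ^ k := by rw [div_pow]; norm_num
      rw [he]
      linarith
  have h1 : (1 : ℚ) - (n.primeFactors.card : ℚ) * (1/2) ^ k
      ≤ ((1 : ℚ) - (1/2) ^ k) ^ n.primeFactors.card := by
    have := one_add_mul_le_pow (a := -((1:ℚ)/2) ^ k)
      (by
        have : ((1:ℚ)/2) ^ k ≤ 1 := pow_le_one₀ (by norm_num) (by norm_num)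
        linarith) n.primeFactors.card
    calc (1 : ℚ) - (n.primeFactors.card : ℚ) * (1/2) ^ k
        = 1 + (n.primeFactors.card : ℚ) * (-((1:ℚ)/2) ^ k) := by ring
      _ ≤ (1 + -((1:ℚ)/2) ^ k) ^ n.primeFactors.card := this
      _ = ((1 : ℚ) - (1/2) ^ k) ^ n.primeFactors.card := by ring_nf
  linarith

lemma key (m n : ℕ) (hm : 0 < m) (hmn : m < n) :
    ∃ K, ∀ k, K ≤ k → J k m < J k n := by
  have hn : 0 < n := hm.trans hmn
  set c : ℚ := (n.primeFactors.card : ℚ) with hc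
  have hc0 : 0 ≤ c := by positivity
  have hr1 : (m : ℚ) / n < 1 := by
    rw [div_lt_one (by exact_mod_cast hn)]
    exact_mod_cast hmn
  have hr0 : (0 : ℚ) ≤ (m : ℚ) / n := by positivity
  obtain ⟨k₁, hk₁⟩ := exists_pow_lt_of_lt_one (show (0:ℚ) < 1/2 by norm_num) hr1
  obtain ⟨k₂, hk₂⟩ := exists_pow_lt_of_lt_one
    (show (0:ℚ) < 1/(2*(c+1)) by positivity) (show (1:ℚ)/2 < 1 by norm_num)
  refine ⟨max k₁ k₂, fun k hk => ?_⟩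
  have hkk₁ : k₁ ≤ k := le_trans (le_max_left _ _) hk
  have hkk₂ : k₂ ≤ k := le_trans (le_max_right _ _) hk
  have hnpos : (0 : ℚ) < (n : ℚ) ^ k := by positivity
  have h1 : ((m : ℚ) / n) ^ k < 1/2 :=
    lt_of_le_of_lt (pow_le_pow_of_le_one hr0 hr1.le hkk₁) hk₁
  have h2 : ((1:ℚ)/2) ^ k < 1/(2*(c+1)) :=
    lt_of_le_of_lt (pow_le_pow_of_le_one (by norm_num) (by norm_num) hkk₂) hk₂
  have hmk : (m : ℚ) ^ k = ((m : ℚ) / n) ^ k * (n : ℚ) ^ k := by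
    rw [div_pow, div_mul_cancel₀]
    positivity
  have hA : J k m < (1/2) * (n : ℚ) ^ k := by
    calc J k m ≤ (m : ℚ) ^ k := J_le_pow k m
      _ = ((m : ℚ) / n) ^ k * (n : ℚ) ^ k := hmk
      _ < (1/2) * (n : ℚ) ^ k := by
          exact mul_lt_mul_of_pos_right h1 hnpos
  have hB : (1/2) * (n : ℚ) ^ k < J k n := by
    have hcl : c * ((1:ℚ)/2) ^ k < 1/2 := by
      rcases eq_or_lt_of_le hc0 with h | h
      · rw [← h]; norm_num
      · have := mul_lt_mul_of_pos_left h2 h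
        have hle : c * (1/(2*(c+1))) ≤ 1/2 := by
          rw [mul_one_div, div_le_div_iff₀ (by positivity) (by norm_num)]
          nlinarith
        linarith
    calc (1/2) * (n : ℚ) ^ k < (1 - c * (1/2) ^ k) * (n : ℚ) ^ k := by
          apply mul_lt_mul_of_pos_right _ hnpos
          linarith
      _ = (n : ℚ) ^ k * (1 - c * (1/2) ^ k) := by ring
      _ ≤ J k n := J_ge k n
  linarith

theorem stmt8 (m n : ℕ) (hm : 0 < m) (hn : 0 < n)
    (h : {k : ℕ | 0 < k ∧ J k m = J k n}.Infinite) : m = n := by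
  rcases Nat.lt_trichotomy m n with hlt | heq | hgt
  · obtain ⟨K, hK⟩ := key m n hm hlt
    obtain ⟨k, hkmem, hkK⟩ := h.exists_gt K
    exact absurd hkmem.2 (ne_of_lt (hK k hkK.le))
  · exact heq
  · obtain ⟨K, hK⟩ := key n m hn hgt
    obtain ⟨k, hkmem, hkK⟩ := h.exists_gt K
    exact absurd hkmem.2.symm (ne_of_lt (hK k hkK.le))
end

section
/- If m, n are positive integers with J₂(m) = J₂(n), J₄(m) = J₄(n), and J₆(m) = J₆(n), then the 2-adic valuations of m and n are equal and the 3-adic valuations of m and n are equal. -/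
/- Auxiliary definitions: F n = J₆(n)/J₂(n) and G n = J₄(n)/J₂(n) as natural numbers. -/
def F (n : ℕ) : ℕ := ∏ p ∈ n.primeFactors, p ^ (4 * n.factorization p - 4) * (p^4 + p^2 + 1)
def G (n : ℕ) : ℕ := ∏ p ∈ n.primeFactors, p ^ (2 * n.factorization p - 2) * (p^2 + 1)

lemma prime_fact_pos {n p : ℕ} (hp : p ∈ n.primeFactors) : 1 ≤ n.factorization p := by
  have := Nat.support_factorization n ▸ hp
  exact Nat.one_le_iff_ne_zero.2 (Finsupp.mem_support_iff.1 this)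

lemma mem_pf (n p : ℕ) : p ∈ n.primeFactors ↔ n.factorization p ≠ 0 := by
  rw [← Nat.support_factorization]; exact Finsupp.mem_support_iff

lemma J_eq (k n : ℕ) (hn : n ≠ 0) :
    J k n = ∏ p ∈ n.primeFactors, ((p:ℚ) ^ (k * n.factorization p - k) * ((p:ℚ)^k - 1)) := by
  unfold J
  have h1 : (n : ℚ) = ∏ p ∈ n.primeFactors, (p:ℚ) ^ n.factorization p := by
    conv_lhs => rw [← Nat.factorization_prod_pow_eq_self hn]
    rw [Nat.prod_factorization_eq_prod_primeFactors]
    push_cast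
    rfl
  rw [h1, ← Finset.prod_pow, ← Finset.prod_mul_distrib]
  apply Finset.prod_congr rfl
  intro p hp
  have hp1 := prime_fact_pos hp
  have hpp : p.Prime := Nat.prime_of_mem_primeFactors hp
  have hp0 : (p:ℚ) ≠ 0 := by exact_mod_cast hpp.ne_zero
  have hle : k ≤ k * n.factorization p := Nat.le_mul_of_pos_right k hp1
  have he : n.factorization p * k = (k * n.factorization p - k) + k := by
    have h := mul_comm (n.factorization p) k
    omega
  rw [← pow_mul, he, pow_add]
  field_simp

lemma J2_ne (n : ℕ) (hn : n ≠ 0) : J 2 n ≠ 0 := by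
  unfold J
  apply mul_ne_zero
  · positivity
  · apply Finset.prod_ne_zero_iff.2
    intro p hp
    have hpp : p.Prime := Nat.prime_of_mem_primeFactors hp
    have h2 : (2:ℚ) ≤ (p:ℚ) := by exact_mod_cast hpp.two_le
    have : (1:ℚ)/(p:ℚ)^2 < 1 := by
      rw [div_lt_one (by positivity)]
      nlinarith
    intro h; rw [sub_eq_zero] at h; rw [← h] at this; norm_num at this

lemma FJ (n : ℕ) (hn : n ≠ 0) : (F n : ℚ) * J 2 n = J 6 n := by
  rw [J_eq 2 n hn, J_eq 6 n hn]
  unfold F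
  push_cast
  rw [← Finset.prod_mul_distrib]
  apply Finset.prod_congr rfl
  intro p hp
  have hp1 := prime_fact_pos hp
  have he : (4 * n.factorization p - 4) + (2 * n.factorization p - 2)
      = 6 * n.factorization p - 6 := by omega
  rw [mul_mul_mul_comm, ← pow_add, he]
  ring_nf

lemma GJ (n : ℕ) (hn : n ≠ 0) : (G n : ℚ) * J 2 n = J 4 n := by
  rw [J_eq 2 n hn, J_eq 4 n hn]
  unfold G
  push_cast
  rw [← Finset.prod_mul_distrib]
  apply Finset.prod_congr rfl
  intro p hp
  have hp1 := prime_fact_pos hp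
  have he : (2 * n.factorization p - 2) + (2 * n.factorization p - 2)
      = 4 * n.factorization p - 4 := by omega
  rw [mul_mul_mul_comm, ← pow_add, he]
  ring_nf

lemma fact_eq_one {q x : ℕ} (hq : q.Prime) (h1 : q ∣ x) (h2 : ¬ q^2 ∣ x) :
    x.factorization q = 1 := by
  have hx : x ≠ 0 := by rintro rfl; exact h2 (dvd_zero _)
  have a1 : 1 ≤ x.factorization q := by
    rw [← Nat.Prime.pow_dvd_iff_le_factorization hq hx, pow_one]; exact h1
  have a2 : ¬ 2 ≤ x.factorization q := by
    rw [← Nat.Prime.pow_dvd_iff_le_factorization hq hx]; exact h2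
  omega

lemma sq_add_one_fact_two {p : ℕ} (hp : p % 2 = 1) : (p^2+1).factorization 2 = 1 := by
  obtain ⟨s, hs⟩ : ∃ s, p = 2*s+1 := ⟨p/2, by omega⟩
  have h : p^2+1 = 4*(s*s+s)+2 := by subst hs; ring
  apply fact_eq_one Nat.prime_two (by omega) (by norm_num; omega)

lemma not_three_dvd_sq_add_one (p : ℕ) : ¬ 3 ∣ p^2 + 1 := by
  have h := Nat.pow_mod p 2 3
  have : p % 3 < 3 := Nat.mod_lt _ (by norm_num)
  interval_cases h' : p % 3 <;> simp [h'] at h <;> omega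

lemma quartic_fact_three {p : ℕ} (hp : p % 3 ≠ 0) : (p^4+p^2+1).factorization 3 = 1 := by
  have h4 := Nat.pow_mod p 4 9
  have h2 := Nat.pow_mod p 2 9
  have h3 : p % 3 = (p % 9) % 3 := by omega
  have h9 : p % 9 < 9 := Nat.mod_lt _ (by norm_num)
  have key : (p^4+p^2+1) % 9 = 3 := by
    interval_cases h' : p % 9 <;> simp [h'] at h4 h2 h3 <;> omega
  apply fact_eq_one Nat.prime_three (by omega) (by norm_num; omega)

lemma quartic_odd {p : ℕ} (hp : p % 2 = 1) : (p^4+p^2+1) % 2 = 1 := by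
  have h4 := Nat.pow_mod p 4 2
  have h2 := Nat.pow_mod p 2 2
  rw [hp] at h4 h2
  omega

lemma pow_mul_fact {p e c q : ℕ} (hp : p ≠ 0) (hpp : p.Prime) (hc : c ≠ 0) :
    (p ^ e * c).factorization q = (if p = q then e else 0) + c.factorization q := by
  rw [Nat.factorization_mul (pow_ne_zero e hp) hc, Finsupp.add_apply,
    hpp.factorization_pow, Finsupp.single_apply]

lemma odd_of_mem_ne_two {n p : ℕ} (hp : p ∈ n.primeFactors) (h : p ≠ 2) : p % 2 = 1 :=
  Nat.odd_iff.1 ((Nat.prime_of_mem_primeFactors hp).odd_of_ne_two h)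

lemma nthree_of_mem_ne_three {n p : ℕ} (hp : p ∈ n.primeFactors) (h : p ≠ 3) : p % 3 ≠ 0 := by
  intro h3
  exact h ((Nat.prime_dvd_prime_iff_eq Nat.prime_three (Nat.prime_of_mem_primeFactors hp)).1
    (by omega)).symm

lemma F_factor_ne {n p : ℕ} (hp : p ∈ n.primeFactors) :
    p ^ (4 * n.factorization p - 4) * (p^4 + p^2 + 1) ≠ 0 := by
  have := (Nat.prime_of_mem_primeFactors hp).pos
  positivity

lemma G_factor_ne {n p : ℕ} (hp : p ∈ n.primeFactors) :
    p ^ (2 * n.factorization p - 2) * (p^2 + 1) ≠ 0 := by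
  have := (Nat.prime_of_mem_primeFactors hp).pos
  positivity

lemma F_fact_two (n : ℕ) : (F n).factorization 2 = 4 * n.factorization 2 - 4 := by
  rw [F, Nat.factorization_prod (fun p hp => F_factor_ne hp), Finsupp.finset_sum_apply]
  by_cases h2 : 2 ∈ n.primeFactors
  · rw [← Finset.add_sum_erase _ _ h2, pow_mul_fact two_ne_zero Nat.prime_two (by norm_num)]
    have hrest : ∑ p ∈ n.primeFactors.erase 2,
        (p ^ (4 * n.factorization p - 4) * (p^4 + p^2 + 1)).factorization 2 = 0 := by
      apply Finset.sum_eq_zero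
      intro p hp
      have hmem := Finset.mem_of_mem_erase hp
      have hne : p ≠ 2 := Finset.ne_of_mem_erase hp
      have hodd := odd_of_mem_ne_two hmem hne
      rw [pow_mul_fact (by omega) (Nat.prime_of_mem_primeFactors hmem) (by positivity),
        if_neg hne, Nat.factorization_eq_zero_of_not_dvd]
      · have := quartic_odd hodd; omega
      · have := quartic_odd hodd; omega
    rw [hrest]
    have h21 : (21:ℕ).factorization 2 = 0 :=
      Nat.factorization_eq_zero_of_not_dvd (by norm_num)
    norm_num [h21]
  · have hv : n.factorization 2 = 0 := by
      rw [← Nat.support_factorization] at h2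
      exact Finsupp.notMem_support_iff.1 h2
    rw [hv]
    simp only [Nat.mul_zero, Nat.zero_sub]
    apply Finset.sum_eq_zero
    intro p hp
    have hne : p ≠ 2 := fun h => h2 (h ▸ hp)
    have hodd := odd_of_mem_ne_two hp hne
    rw [pow_mul_fact (by omega) (Nat.prime_of_mem_primeFactors hp) (by positivity),
      if_neg hne, Nat.factorization_eq_zero_of_not_dvd]
    · have := quartic_odd hodd; omega
    · have := quartic_odd hodd; omega

lemma F_fact_three (n : ℕ) :
    (F n).factorization 3 = (4 * n.factorization 3 - 4) + (n.primeFactors.erase 3).card := by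
  rw [F, Nat.factorization_prod (fun p hp => F_factor_ne hp), Finsupp.finset_sum_apply]
  have hrest : ∑ p ∈ n.primeFactors.erase 3,
      (p ^ (4 * n.factorization p - 4) * (p^4 + p^2 + 1)).factorization 3
      = (n.primeFactors.erase 3).card := by
    rw [Finset.card_eq_sum_ones]
    apply Finset.sum_congr rfl
    intro p hp
    have hmem := Finset.mem_of_mem_erase hp
    have hne : p ≠ 3 := Finset.ne_of_mem_erase hp
    rw [pow_mul_fact (Nat.prime_of_mem_primeFactors hmem).ne_zero
      (Nat.prime_of_mem_primeFactors hmem) (by positivity), if_neg hne,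
      quartic_fact_three (nthree_of_mem_ne_three hmem hne)]
  by_cases h3 : 3 ∈ n.primeFactors
  · rw [← Finset.add_sum_erase _ _ h3, hrest,
      pow_mul_fact three_ne_zero Nat.prime_three (by norm_num)]
    have h91 : ((3:ℕ)^4 + 3^2 + 1).factorization 3 = 0 :=
      Nat.factorization_eq_zero_of_not_dvd (by norm_num)
    rw [if_pos rfl, h91]; omega
  · have hv : n.factorization 3 = 0 := by
      rw [← Nat.support_factorization] at h3
      exact Finsupp.notMem_support_iff.1 h3
    rw [Finset.erase_eq_of_notMem h3] at hrest
    rw [hrest, hv, Finset.erase_eq_of_notMem h3]; omega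

lemma G_fact_two (n : ℕ) :
    (G n).factorization 2 = (2 * n.factorization 2 - 2) + (n.primeFactors.erase 2).card := by
  rw [G, Nat.factorization_prod (fun p hp => G_factor_ne hp), Finsupp.finset_sum_apply]
  have hrest : ∑ p ∈ n.primeFactors.erase 2,
      (p ^ (2 * n.factorization p - 2) * (p^2 + 1)).factorization 2
      = (n.primeFactors.erase 2).card := by
    rw [Finset.card_eq_sum_ones]
    apply Finset.sum_congr rfl
    intro p hp
    have hmem := Finset.mem_of_mem_erase hp
    have hne : p ≠ 2 := Finset.ne_of_mem_erase hp
    rw [pow_mul_fact (Nat.prime_of_mem_primeFactors hmem).ne_zero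
      (Nat.prime_of_mem_primeFactors hmem) (by positivity), if_neg hne,
      sq_add_one_fact_two (odd_of_mem_ne_two hmem hne)]
  by_cases h2 : 2 ∈ n.primeFactors
  · rw [← Finset.add_sum_erase _ _ h2, hrest,
      pow_mul_fact two_ne_zero Nat.prime_two (by norm_num)]
    have h5 : ((2:ℕ)^2 + 1).factorization 2 = 0 :=
      Nat.factorization_eq_zero_of_not_dvd (by norm_num)
    rw [if_pos rfl, h5]; omega
  · have hv : n.factorization 2 = 0 := by
      rw [← Nat.support_factorization] at h2
      exact Finsupp.notMem_support_iff.1 h2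
    rw [Finset.erase_eq_of_notMem h2] at hrest
    rw [hrest, hv, Finset.erase_eq_of_notMem h2]; omega

lemma G_fact_three (n : ℕ) : (G n).factorization 3 = 2 * n.factorization 3 - 2 := by
  rw [G, Nat.factorization_prod (fun p hp => G_factor_ne hp), Finsupp.finset_sum_apply]
  by_cases h3 : 3 ∈ n.primeFactors
  · rw [← Finset.add_sum_erase _ _ h3,
      pow_mul_fact three_ne_zero Nat.prime_three (by norm_num)]
    have hrest : ∑ p ∈ n.primeFactors.erase 3,
        (p ^ (2 * n.factorization p - 2) * (p^2 + 1)).factorization 3 = 0 := by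
      apply Finset.sum_eq_zero
      intro p hp
      have hmem := Finset.mem_of_mem_erase hp
      have hne : p ≠ 3 := Finset.ne_of_mem_erase hp
      rw [pow_mul_fact (Nat.prime_of_mem_primeFactors hmem).ne_zero
        (Nat.prime_of_mem_primeFactors hmem) (by positivity), if_neg hne,
        Nat.factorization_eq_zero_of_not_dvd (not_three_dvd_sq_add_one p)]
      omega
    have h10 : ((3:ℕ)^2 + 1).factorization 3 = 0 :=
      Nat.factorization_eq_zero_of_not_dvd (by norm_num)
    rw [hrest, if_pos rfl, h10]; omega
  · have hv : n.factorization 3 = 0 := by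
      rw [← Nat.support_factorization] at h3
      exact Finsupp.notMem_support_iff.1 h3
    rw [hv]
    simp only [Nat.mul_zero, Nat.zero_sub]
    apply Finset.sum_eq_zero
    intro p hp
    have hne : p ≠ 3 := fun h => h3 (h ▸ hp)
    rw [pow_mul_fact (Nat.prime_of_mem_primeFactors hp).ne_zero
      (Nat.prime_of_mem_primeFactors hp) (by positivity), if_neg hne,
      Nat.factorization_eq_zero_of_not_dvd (not_three_dvd_sq_add_one p)]
    omega

lemma three_pow_zmod8 (k : ℕ) : (3:ZMod 8)^k = 1 ∨ (3:ZMod 8)^k = 3 := by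
  induction k with
  | zero => left; rfl
  | succ k ih =>
    rcases ih with h | h
    · right; rw [pow_succ, h]; decide
    · left; rw [pow_succ, h]; decide

lemma factor_mod8 {n p : ℕ} (hp : p ∈ n.primeFactors) (hne : p ≠ 2) :
    ((p ^ (4 * n.factorization p - 4) * (p^4 + p^2 + 1) : ℕ) : ZMod 8) = 3 := by
  have hodd := odd_of_mem_ne_two hp hne
  have hsq : ((p:ℕ):ZMod 8)^2 = 1 := by
    have h8 : p % 8 = 1 ∨ p % 8 = 3 ∨ p % 8 = 5 ∨ p % 8 = 7 := by omega
    have hc : ((p % 8 : ℕ) : ZMod 8) = ((p:ℕ) : ZMod 8) := ZMod.natCast_mod p 8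
    rcases h8 with h | h | h | h <;> rw [← hc, h] <;> decide
  have he : 4 * n.factorization p - 4 = 2 * (2 * n.factorization p - 2) := by omega
  push_cast
  rw [he, pow_mul, hsq, one_pow, one_mul,
    show ((p:ℕ):ZMod 8)^4 = (((p:ℕ):ZMod 8)^2)^2 by ring, hsq]
  decide

lemma F_mod8_odd {n : ℕ} (h : 2 ∉ n.primeFactors) :
    ((F n : ℕ) : ZMod 8) = 3 ^ n.primeFactors.card := by
  rw [F, Nat.cast_prod,
    Finset.prod_congr rfl (fun p hp => factor_mod8 hp (fun h' => h (h' ▸ hp))),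
    Finset.prod_const]

lemma F_mod8_two {n : ℕ} (h2 : 2 ∈ n.primeFactors) (hv : n.factorization 2 = 1) :
    ((F n : ℕ) : ZMod 8) = 5 * 3 ^ (n.primeFactors.erase 2).card := by
  rw [F, Nat.cast_prod, ← Finset.mul_prod_erase _ _ h2,
    Finset.prod_congr rfl (fun p hp => factor_mod8 (Finset.mem_of_mem_erase hp)
      (Finset.ne_of_mem_erase hp)), Finset.prod_const, hv]
  norm_num
  congr 1

lemma key2 (m n : ℕ) (hF : F m = F n) (hm2 : 2 ∉ m.primeFactors)
    (hn2 : 2 ∈ n.primeFactors) (hv : n.factorization 2 = 1) : False := by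
  have e1 := F_mod8_odd hm2
  have e2 := F_mod8_two hn2 hv
  rw [hF, e2] at e1
  rcases three_pow_zmod8 (n.primeFactors.erase 2).card with h | h <;>
    rcases three_pow_zmod8 m.primeFactors.card with h' | h' <;>
    rw [h, h'] at e1 <;> revert e1 <;> decide

lemma key3 (m n : ℕ) (hcard : m.primeFactors.card = n.primeFactors.card)
    (hF : F m = F n) (hm3 : 3 ∉ m.primeFactors) (hn3 : 3 ∈ n.primeFactors)
    (hvm : m.factorization 3 = 0) (hvn : n.factorization 3 = 1) : False := by
  have e1 := F_fact_three m
  have e2 := F_fact_three n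
  rw [hF, e2] at e1
  rw [hvm, Finset.erase_eq_of_notMem hm3] at e1
  rw [hvn, Finset.card_erase_of_mem hn3] at e1
  have hpos : 0 < n.primeFactors.card := Finset.card_pos.2 ⟨3, hn3⟩
  omega

theorem stmt9 (m n : ℕ) (hm : 0 < m) (hn : 0 < n)
    (h2 : J 2 m = J 2 n) (h4 : J 4 m = J 4 n) (h6 : J 6 m = J 6 n) :
    m.factorization 2 = n.factorization 2 ∧ m.factorization 3 = n.factorization 3 := by
  have hm' : m ≠ 0 := hm.ne'
  have hn' : n ≠ 0 := hn.ne'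
  have hF : F m = F n := by
    have h1 : (F m : ℚ) * J 2 m = (F n : ℚ) * J 2 m := by
      rw [FJ m hm', h2, h6, FJ n hn']
    exact_mod_cast mul_right_cancel₀ (J2_ne m hm') h1
  have hG : G m = G n := by
    have h1 : (G m : ℚ) * J 2 m = (G n : ℚ) * J 2 m := by
      rw [GJ m hm', h2, h4, GJ n hn']
    exact_mod_cast mul_right_cancel₀ (J2_ne m hm') h1
  -- 2-adic valuations
  have e2m := F_fact_two m
  have e2n := F_fact_two n
  rw [hF, e2n] at e2m
  have hab : m.factorization 2 = n.factorization 2 := by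
    by_contra hne
    have hcase : (m.factorization 2 = 0 ∧ n.factorization 2 = 1) ∨
        (m.factorization 2 = 1 ∧ n.factorization 2 = 0) := by omega
    rcases hcase with ⟨ha, hb⟩ | ⟨ha, hb⟩
    · exact key2 m n hF (fun h => (mem_pf m 2).1 h ha) ((mem_pf n 2).2 (by omega)) hb
    · exact key2 n m hF.symm (fun h => (mem_pf n 2).1 h hb) ((mem_pf m 2).2 (by omega)) ha
  refine ⟨hab, ?_⟩
  -- number of prime factors
  have g2m := G_fact_two m
  have g2n := G_fact_two n
  rw [hG, g2n] at g2m
  have herase : (m.primeFactors.erase 2).card = (n.primeFactors.erase 2).card := by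
    rw [hab] at g2m; omega
  have hcard : m.primeFactors.card = n.primeFactors.card := by
    by_cases h2m : 2 ∈ m.primeFactors
    · have h2n' : 2 ∈ n.primeFactors := (mem_pf n 2).2 (hab ▸ (mem_pf m 2).1 h2m)
      have c1 := Finset.card_erase_of_mem h2m
      have c2 := Finset.card_erase_of_mem h2n'
      have p1 : 0 < m.primeFactors.card := Finset.card_pos.2 ⟨2, h2m⟩
      have p2 : 0 < n.primeFactors.card := Finset.card_pos.2 ⟨2, h2n'⟩
      omega
    · have h2n' : 2 ∉ n.primeFactors := fun h =>
        h2m ((mem_pf m 2).2 (hab ▸ (mem_pf n 2).1 h))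
      rw [Finset.erase_eq_of_notMem h2m, Finset.erase_eq_of_notMem h2n'] at herase
      exact herase
  -- 3-adic valuations
  have g3m := G_fact_three m
  have g3n := G_fact_three n
  rw [hG, g3n] at g3m
  by_contra hne
  have hcase : (m.factorization 3 = 0 ∧ n.factorization 3 = 1) ∨
      (m.factorization 3 = 1 ∧ n.factorization 3 = 0) := by omega
  rcases hcase with ⟨ha, hb⟩ | ⟨ha, hb⟩
  · exact key3 m n hcard hF (fun h => (mem_pf m 3).1 h ha) ((mem_pf n 3).2 (by omega)) ha hb
  · exact key3 n m hcard.symm hF.symm (fun h => (mem_pf n 3).1 h hb)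
      ((mem_pf m 3).2 (by omega)) hb ha
end

section
/- The function c(n) = (n² − 1)(n² + 6)/60 satisfies, for all integers n ≥ 2: c(2n+1) = (n³(n+2)/(2n+1))·(3c(n) + c(n+2)) − ((n−1)(n+1)³/(2n+1))·(c(n−1) + 3c(n+1)), and for all n ≥ 3: c(2n) = ((n−1)²(n+2)/4)·(2c(n−1) + c(n) + c(n+2) − c(2)) − ((n−2)(n+1)²/4)·(c(n−2) + c(n) + 2c(n+1) − c(2)). -/
noncomputable def c : ℕ → ℚ := fun n => ((n : ℚ) ^ 2 - 1) * ((n : ℚ) ^ 2 + 6) / 60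

theorem stmt14 :
    (∀ n : ℕ, 2 ≤ n →
      c (2 * n + 1) = ((n : ℚ) ^ 3 * (n + 2) / (2 * n + 1)) * (3 * c n + c (n + 2))
        - (((n : ℚ) - 1) * ((n : ℚ) + 1) ^ 3 / (2 * n + 1)) * (c (n - 1) + 3 * c (n + 1))) ∧
    (∀ n : ℕ, 3 ≤ n →
      c (2 * n) = (((n : ℚ) - 1) ^ 2 * ((n : ℚ) + 2) / 4) * (2 * c (n - 1) + c n + c (n + 2) - c 2)
        - (((n : ℚ) - 2) * ((n : ℚ) + 1) ^ 2 / 4) * (c (n - 2) + c n + 2 * c (n + 1) - c 2)) := by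
  constructor
  · rintro n hn
    obtain ⟨m, rfl⟩ := Nat.exists_eq_add_of_le hn
    simp only [c]
    have h : ((2 : ℚ) * (2 + m) + 1) ≠ 0 := by positivity
    push_cast [Nat.add_sub_cancel_left, show 2 + m - 1 = 1 + m by omega]
    field_simp
    ring
  · rintro n hn
    obtain ⟨m, rfl⟩ := Nat.exists_eq_add_of_le hn
    simp only [c]
    have h1 : 3 + m - 1 = 2 + m := by omega
    have h2 : 3 + m - 2 = 1 + m := by omega
    rw [h1, h2]
    push_cast
    field_simp
    ring
end
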